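/- For any function g : ℕ → ℝ, letting f(n,p) = E[g(X(n,p))], the second discrete difference in n satisfies f(n+2,p) - 2f(n+1,p) + f(n,p) = p² · E[g(2+X(n,p)) - 2g(1+X(n,p)) + g(X(n,p))]. -/

import Mathlib

open Finset

noncomputable def binExp (n : ℕ) (p : ℝ) (g : ℕ → ℝ) : ℝ :=
  ∑ ℓ ∈ Finset.range (n + 1), (n.choose ℓ : ℝ) * p ^ ℓ * (1 - p) ^ (n - ℓ) * g ℓ

lemma binExp_succ (n : ℕ) (p : ℝ) (g : ℕ → ℝ) :
    binExp (n + 1) p g =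
      p * binExp n p (fun ℓ => g (ℓ + 1)) + (1 - p) * binExp n p g := by
  unfold binExp
  rw [Finset.sum_range_succ' (fun ℓ => ((n+1).choose ℓ : ℝ) * p ^ ℓ * (1 - p) ^ (n + 1 - ℓ) * g ℓ),
      Finset.sum_range_succ' (fun ℓ => (n.choose ℓ : ℝ) * p ^ ℓ * (1 - p) ^ (n - ℓ) * g ℓ)]
  simp only [Nat.choose_succ_succ, Nat.cast_add, Nat.choose_zero_right, Nat.succ_sub_succ,
    Nat.cast_one, pow_zero, Nat.sub_zero]
  have h1 : ∀ i ∈ Finset.range (n + 1),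
      ((n.choose i : ℝ) + (n.choose (i+1) : ℝ)) * p ^ (i+1) * (1 - p) ^ (n - i) * g (i+1)
      = p * ((n.choose i : ℝ) * p ^ i * (1 - p) ^ (n - i) * g (i+1))
        + ((n.choose (i+1) : ℝ) * p ^ (i+1) * (1 - p) ^ (n - i) * g (i+1)) := by
    intro i _
    ring
  rw [Finset.sum_congr rfl h1, Finset.sum_add_distrib, ← Finset.mul_sum]
  have h2 : ∑ i ∈ Finset.range (n + 1),
      ((n.choose (i+1) : ℝ) * p ^ (i+1) * (1 - p) ^ (n - i) * g (i+1))
      = ∑ i ∈ Finset.range n,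
      (1 - p) * ((n.choose (i+1) : ℝ) * p ^ (i+1) * (1 - p) ^ (n - (i+1)) * g (i+1)) := by
    rw [Finset.sum_range_succ, Nat.choose_succ_self]
    simp only [Nat.cast_zero, zero_mul, add_zero]
    apply Finset.sum_congr rfl
    intro i hi
    simp only [Finset.mem_range] at hi
    have : n - i = (n - (i + 1)) + 1 := by omega
    rw [this, pow_succ]
    ring
  rw [h2, ← Finset.mul_sum]
  ring

lemma binExp_lin (n : ℕ) (p : ℝ) (a b c : ℕ → ℝ) :
    binExp n p (fun ℓ => a ℓ - 2 * b ℓ + c ℓ) =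
      binExp n p a - 2 * binExp n p b + binExp n p c := by
  unfold binExp
  rw [Finset.mul_sum, ← Finset.sum_sub_distrib, ← Finset.sum_add_distrib]
  apply Finset.sum_congr rfl
  intro i _
  ring

theorem stmt4 (n : ℕ) (p : ℝ) (g : ℕ → ℝ) :
    binExp (n + 2) p g - 2 * binExp (n + 1) p g + binExp n p g =
      p ^ 2 * binExp n p (fun ℓ => g (ℓ + 2) - 2 * g (ℓ + 1) + g ℓ) := by
  have e1 : binExp (n + 2) p g =
      p * binExp (n + 1) p (fun ℓ => g (ℓ + 1)) + (1 - p) * binExp (n + 1) p g :=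
    binExp_succ (n + 1) p g
  rw [e1, binExp_succ n p g, binExp_succ n p (fun ℓ => g (ℓ + 1)),
      binExp_lin n p (fun ℓ => g (ℓ + 2)) (fun ℓ => g (ℓ + 1)) g]
  have : (fun ℓ => g (ℓ + 1 + 1)) = (fun ℓ => g (ℓ + 2)) := rfl
  rw [this]
  ring
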